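/- arXiv:1006.2533 — 3 statements merged into one kernel-verified Lean document; each statement's English description precedes it below -/
import Mathlib

section
/- Let f(t) = A(t)e^{2πiφ(t)} where A is C¹ with ‖A'‖_∞ ≤ ε‖φ'‖_∞ and φ is C² with ‖φ''‖_∞ ≤ ε‖φ'‖_∞, A, φ' bounded. Let g be a Schwartz function and define V_g f(t,η) = ∫ f(x) g(x-t) e^{-2πiη(x-t)} dx and Q(t,η) = A(t)e^{2πiφ(t)} ĝ(η - φ'(t)). Then for all (t,η), |V_g f(t,η) - Q(t,η)| ≤ ε‖φ'‖_∞ (I₁ + π‖A‖_∞ I₂), where I_n = ∫ |u|^n |g(u)| du. -/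
open Complex MeasureTheory

lemma lip_of_deriv_bound {f : ℝ → ℝ} (hf : Differentiable ℝ f) {K : ℝ}
    (hK : ∀ x, |deriv f x| ≤ K) (a b : ℝ) : |f b - f a| ≤ K * |b - a| := by
  have := Convex.norm_image_sub_le_of_norm_deriv_le (s := Set.univ)
    (fun x _ => hf x) (fun x _ => by simpa using hK x) convex_univ (Set.mem_univ a) (Set.mem_univ b)
  simpa using this

lemma quad_taylor {φ : ℝ → ℝ} (hφ : ContDiff ℝ 2 φ) {K : ℝ}
    (hK : ∀ x, |deriv (deriv φ) x| ≤ K) (a b : ℝ) :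
    |φ b - φ a - deriv φ a * (b - a)| ≤ K / 2 * (b - a) ^ 2 := by
  have h2 : ContDiff ℝ (1 + 1 : ℕ) φ := by exact_mod_cast hφ
  have hd1 : Differentiable ℝ φ := hφ.differentiable two_ne_zero
  have hd2 : Differentiable ℝ (deriv φ) :=
    ((contDiff_succ_iff_deriv.mp h2).2.2).differentiable one_ne_zero
  have lip : ∀ x, |deriv φ x - deriv φ a| ≤ K * |x - a| :=
    fun x => lip_of_deriv_bound hd2 hK a x
  have hFTC : ∫ x in a..b, deriv φ x = φ b - φ a :=
    intervalIntegral.integral_deriv_eq_sub (fun x _ => hd1 x)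
      (hd2.continuous.intervalIntegrable a b)
  have hint : IntervalIntegrable (fun x => deriv φ x - deriv φ a) volume a b :=
    ((hd2.continuous.sub continuous_const).intervalIntegrable a b)
  have hrepr : φ b - φ a - deriv φ a * (b - a) = ∫ x in a..b, (deriv φ x - deriv φ a) := by
    rw [intervalIntegral.integral_sub (hd2.continuous.intervalIntegrable a b)
      (intervalIntegrable_const), hFTC, intervalIntegral.integral_const]
    simp [smul_eq_mul]; ring
  rw [hrepr]
  rcases le_total a b with hab | hab
  · have hmono : (∫ x in a..b, |deriv φ x - deriv φ a|) ≤ ∫ x in a..b, K * (x - a) := by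
      apply intervalIntegral.integral_mono_on hab
        (hint.abs) ((by fun_prop : Continuous fun x : ℝ => K * (x - a)).intervalIntegrable a b)
      intro x hx
      have := lip x
      rwa [_root_.abs_of_nonneg (by linarith [hx.1] : (0:ℝ) ≤ x - a)] at this
    have hval : (∫ x in a..b, K * (x - a)) = K / 2 * (b - a) ^ 2 := by
      rw [intervalIntegral.integral_const_mul]
      rw [intervalIntegral.integral_sub (intervalIntegral.intervalIntegrable_id) (intervalIntegrable_const),
        integral_id, intervalIntegral.integral_const]
      simp [smul_eq_mul]; ring
    calc |∫ x in a..b, (deriv φ x - deriv φ a)| ≤ ∫ x in a..b, |deriv φ x - deriv φ a| :=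
          intervalIntegral.abs_integral_le_integral_abs hab
      _ ≤ K / 2 * (b - a) ^ 2 := by rw [← hval]; exact hmono
  · have hmono : (∫ x in b..a, |deriv φ x - deriv φ a|) ≤ ∫ x in b..a, K * (a - x) := by
      apply intervalIntegral.integral_mono_on hab
        (hint.symm.abs) ((by fun_prop : Continuous fun x : ℝ => K * (a - x)).intervalIntegrable b a)
      intro x hx
      have := lip x
      rwa [_root_.abs_of_nonpos (by linarith [hx.2] : x - a ≤ 0), neg_sub] at this
    have hval : (∫ x in b..a, K * (a - x)) = K / 2 * (b - a) ^ 2 := by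
      rw [intervalIntegral.integral_const_mul]
      rw [intervalIntegral.integral_sub (intervalIntegrable_const) (intervalIntegral.intervalIntegrable_id),
        integral_id, intervalIntegral.integral_const]
      simp [smul_eq_mul]; ring
    calc |∫ x in a..b, (deriv φ x - deriv φ a)|
        = |∫ x in b..a, (deriv φ x - deriv φ a)| := by
          rw [intervalIntegral.integral_symm]; rw [abs_neg]
      _ ≤ ∫ x in b..a, |deriv φ x - deriv φ a| :=
          intervalIntegral.abs_integral_le_integral_abs hab
      _ ≤ K / 2 * (b - a) ^ 2 := by rw [← hval]; exact hmono

lemma cexp_I_dist (a b : ℝ) :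
    ‖Complex.exp (↑a * Complex.I) - Complex.exp (↑b * Complex.I)‖ ≤ |a - b| := by
  have hd : ∀ x : ℝ, HasDerivAt (fun x : ℝ => Complex.exp (↑x * Complex.I))
      (Complex.exp (↑x * Complex.I) * Complex.I) x := by
    intro x
    simpa using (((hasDerivAt_id x).ofReal_comp).mul_const Complex.I).cexp
  have := Convex.norm_image_sub_le_of_norm_deriv_le (s := Set.univ) (C := 1)
    (fun x _ => (hd x).differentiableAt) (fun x _ => by
      rw [(hd x).deriv]
      simp [Complex.norm_exp])
    convex_univ (Set.mem_univ b) (Set.mem_univ a)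
  simpa using this

lemma key_abs {a₁ a₂ α β C₁ C₂ : ℝ} (h1 : |a₁ - a₂| ≤ C₁) (h2 : |a₂| * |α - β| ≤ C₂) :
    ‖(a₁:ℂ) * Complex.exp (↑α * Complex.I) - (a₂:ℂ) * Complex.exp (↑β * Complex.I)‖
      ≤ C₁ + C₂ := by
  have hsplit : (a₁:ℂ) * Complex.exp (↑α * Complex.I) - (a₂:ℂ) * Complex.exp (↑β * Complex.I)
      = ((a₁:ℂ) - a₂) * Complex.exp (↑α * Complex.I)
        + (a₂:ℂ) * (Complex.exp (↑α * Complex.I) - Complex.exp (↑β * Complex.I)) := by ring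
  rw [hsplit]
  refine le_trans (norm_add_le _ _) (add_le_add ?_ ?_)
  · rw [norm_mul, Complex.norm_exp_ofReal_mul_I, mul_one, ← Complex.ofReal_sub, Complex.norm_real, Real.norm_eq_abs]
    exact h1
  · rw [norm_mul, Complex.norm_real, Real.norm_eq_abs]
    exact le_trans (mul_le_mul_of_nonneg_left (cexp_I_dist α β) (abs_nonneg _)) h2

/-- For an IMF `f(t) = A(t)e^{2πiφ(t)}` with `‖A'‖∞ ≤ ε‖φ'‖∞`, `‖φ''‖∞ ≤ ε‖φ'‖∞`
and a Schwartz window `g`, the modified STFT `V_g f(t,η)` is close to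
`Q(t,η) = A(t)e^{2πiφ(t)} ĝ(η-φ'(t))`:
`|V_g f(t,η) - Q(t,η)| ≤ ε‖φ'‖∞ (I₁ + π‖A‖∞ I₂)`. -/
theorem stft_approx_Q
    (A φ : ℝ → ℝ) (hA : ContDiff ℝ 1 A) (hφ : ContDiff ℝ 2 φ)
    (hApos : ∀ x, 0 < A x) (hφ'pos : ∀ x, 0 < deriv φ x)
    (ε MA Mφ' : ℝ) (hε : 0 < ε)
    (hMA : ∀ x, |A x| ≤ MA) (hMφ' : ∀ x, |deriv φ x| ≤ Mφ')
    (hA' : ∀ x, |deriv A x| ≤ ε * Mφ')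
    (hφ'' : ∀ x, |deriv (deriv φ) x| ≤ ε * Mφ')
    (g : SchwartzMap ℝ ℂ)
    (I₁ I₂ : ℝ)
    (hI₁ : I₁ = ∫ u : ℝ, |u| * ‖g u‖)
    (hI₂ : I₂ = ∫ u : ℝ, |u| ^ 2 * ‖g u‖) :
    ∀ t η : ℝ,
      ‖((∫ x : ℝ, ((A x : ℂ) * Complex.exp (2 * Real.pi * Complex.I * (φ x : ℂ))) *
              g (x - t) * Complex.exp (-(2 * Real.pi * Complex.I * (η : ℂ) * ((x : ℂ) - t))))
          - (A t : ℂ) * Complex.exp (2 * Real.pi * Complex.I * (φ t : ℂ)) *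
              FourierTransform.fourier (fun u => g u) (η - deriv φ t))‖
        ≤ ε * Mφ' * (I₁ + Real.pi * MA * I₂) := by
  intro t η
  set K := ε * Mφ' with hKdef
  have hMφ'0 : 0 ≤ Mφ' := le_trans (abs_nonneg _) (hMφ' 0)
  have hK0 : 0 ≤ K := mul_nonneg hε.le hMφ'0
  have hMA0 : 0 ≤ MA := le_trans (abs_nonneg _) (hMA 0)
  have hdA : Differentiable ℝ A := hA.differentiable one_ne_zero
  have hlipA : ∀ u : ℝ, |A (u + t) - A t| ≤ K * |u| := by
    intro u
    have := lip_of_deriv_bound hdA hA' t (u + t)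
    simpa using this
  have hquad : ∀ u : ℝ, |φ (u + t) - φ t - deriv φ t * u| ≤ K / 2 * u ^ 2 := by
    intro u
    have := quad_taylor hφ hφ'' t (u + t)
    simpa using this
  set V : ℝ → ℂ := fun u => ((A (u+t) : ℂ) *
      Complex.exp (2 * Real.pi * Complex.I * (φ (u+t) : ℂ))) *
      g u * Complex.exp (-(2 * Real.pi * Complex.I * (η : ℂ) * (u : ℂ))) with hVdef
  set Qi : ℝ → ℂ := fun u => (A t : ℂ) * Complex.exp (2 * Real.pi * Complex.I * (φ t : ℂ)) *
      (Complex.exp (↑(-2 * Real.pi * u * (η - deriv φ t)) * Complex.I) * g u) with hQidef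
  -- change of variables
  have hchange : (∫ x : ℝ, ((A x : ℂ) * Complex.exp (2 * Real.pi * Complex.I * (φ x : ℂ))) *
        g (x - t) * Complex.exp (-(2 * Real.pi * Complex.I * (η : ℂ) * ((x : ℂ) - t))))
      = ∫ u : ℝ, V u := by
    rw [← integral_add_right_eq_self (fun x : ℝ =>
      ((A x : ℂ) * Complex.exp (2 * Real.pi * Complex.I * (φ x : ℂ))) *
        g (x - t) * Complex.exp (-(2 * Real.pi * Complex.I * (η : ℂ) * ((x : ℂ) - t)))) t]
    congr 1; funext u
    simp only [hVdef, add_sub_cancel_right]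
    norm_num
  -- the Q term as an integral
  have hQ : (A t : ℂ) * Complex.exp (2 * Real.pi * Complex.I * (φ t : ℂ)) *
        FourierTransform.fourier (fun u => g u) (η - deriv φ t) = ∫ u : ℝ, Qi u := by
    rw [Real.fourier_real_eq_integral_exp_smul, ← integral_const_mul]
    simp only [hQidef, smul_eq_mul]
  -- integrability
  have hVi : Integrable V := by
    refine Integrable.mono' (g.integrable.norm.const_mul MA) ?_ ?_
    · apply Continuous.aestronglyMeasurable
      have hgc : Continuous fun u : ℝ => (g u : ℂ) := g.continuous
      have hAc : Continuous A := hA.continuous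
      have hφc : Continuous φ := hφ.continuous
      rw [hVdef]
      fun_prop
    · filter_upwards with u
      have h1 : ‖Complex.exp (2 * Real.pi * Complex.I * ((φ (u+t) : ℝ) : ℂ))‖ = 1 := by
        simp [Complex.norm_exp]
      have h2 : ‖Complex.exp (-(2 * Real.pi * Complex.I * (η : ℂ) * (u : ℂ)))‖ = 1 := by
        simp [Complex.norm_exp]
      rw [hVdef]
      simp only []
      rw [norm_mul, norm_mul, norm_mul, h1, h2, Complex.norm_real, Real.norm_eq_abs,
        mul_one, mul_one]
      exact mul_le_mul_of_nonneg_right (hMA _) (norm_nonneg _)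
  have hQii : Integrable Qi := by
    refine Integrable.mono' (g.integrable.norm.const_mul (|A t|)) ?_ ?_
    · apply Continuous.aestronglyMeasurable
      have hgc : Continuous fun u : ℝ => (g u : ℂ) := g.continuous
      rw [hQidef]
      fun_prop
    · filter_upwards with u
      have h1 : ‖Complex.exp (2 * Real.pi * Complex.I * ((φ t : ℝ) : ℂ))‖ = 1 := by
        simp [Complex.norm_exp]
      have h2 : ‖Complex.exp (↑(-2 * Real.pi * u * (η - deriv φ t)) * Complex.I)‖ = 1 :=
        Complex.norm_exp_ofReal_mul_I _
      rw [hQidef]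
      simp only []
      rw [norm_mul, norm_mul, norm_mul, h1, h2, Complex.norm_real, Real.norm_eq_abs,
        mul_one, one_mul]
  -- pointwise bound
  have key : ∀ u : ℝ, ‖V u - Qi u‖ ≤
      K * (|u| * ‖g u‖) + K * Real.pi * MA * (|u| ^ 2 * ‖g u‖) := by
    intro u
    have hVu : V u = ((A (u+t) : ℝ) : ℂ) *
        Complex.exp (↑(2 * Real.pi * φ (u+t) - 2 * Real.pi * (η * u)) * Complex.I) * g u := by
      rw [hVdef]
      simp only []
      rw [show (-(2 * (Real.pi:ℂ) * Complex.I * (η:ℂ) * (u:ℂ)))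
          = -(2 * (Real.pi:ℂ) * Complex.I * ((η * u : ℝ) : ℂ)) by push_cast; ring]
      rw [show ((A (u+t) : ℂ) * Complex.exp (2 * Real.pi * Complex.I * (φ (u+t) : ℂ))) *
          g u * Complex.exp (-(2 * (Real.pi:ℂ) * Complex.I * ((η * u : ℝ) : ℂ)))
          = (A (u+t) : ℂ) * (Complex.exp (2 * Real.pi * Complex.I * (φ (u+t) : ℂ)) *
            Complex.exp (-(2 * (Real.pi:ℂ) * Complex.I * ((η * u : ℝ) : ℂ)))) * g u from by ring]
      rw [← Complex.exp_add]
      congr 2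
      push_cast; ring
    have hQu : Qi u = ((A t : ℝ) : ℂ) *
        Complex.exp (↑(2 * Real.pi * (φ t + deriv φ t * u) - 2 * Real.pi * (η * u)) * Complex.I)
          * g u := by
      rw [hQidef]
      simp only []
      rw [show (A t : ℂ) * Complex.exp (2 * Real.pi * Complex.I * (φ t : ℂ)) *
          (Complex.exp (↑(-2 * Real.pi * u * (η - deriv φ t)) * Complex.I) * g u)
          = (A t : ℂ) * (Complex.exp (2 * Real.pi * Complex.I * (φ t : ℂ)) *
            Complex.exp (↑(-2 * Real.pi * u * (η - deriv φ t)) * Complex.I)) * g u from by ring]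
      rw [← Complex.exp_add]
      congr 2
      push_cast; ring
    have hDf : V u - Qi u = (((A (u+t) : ℝ) : ℂ) *
        Complex.exp (↑(2 * Real.pi * φ (u+t) - 2 * Real.pi * (η * u)) * Complex.I)
        - ((A t : ℝ) : ℂ) *
        Complex.exp (↑(2 * Real.pi * (φ t + deriv φ t * u) - 2 * Real.pi * (η * u)) * Complex.I))
        * g u := by
      rw [hVu, hQu]; ring
    rw [hDf, norm_mul]
    have hh2 : |A t| * |(2 * Real.pi * φ (u+t) - 2 * Real.pi * (η * u)) -
        (2 * Real.pi * (φ t + deriv φ t * u) - 2 * Real.pi * (η * u))|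
        ≤ MA * (Real.pi * K * u ^ 2) := by
      have harg : (2 * Real.pi * φ (u+t) - 2 * Real.pi * (η * u)) -
          (2 * Real.pi * (φ t + deriv φ t * u) - 2 * Real.pi * (η * u))
          = 2 * Real.pi * (φ (u+t) - φ t - deriv φ t * u) := by ring
      rw [harg, abs_mul, _root_.abs_of_pos (by positivity : (0:ℝ) < 2 * Real.pi)]
      refine mul_le_mul (hMA t) ?_ (by positivity) hMA0
      calc 2 * Real.pi * |φ (u+t) - φ t - deriv φ t * u|
          ≤ 2 * Real.pi * (K / 2 * u ^ 2) := by
            exact mul_le_mul_of_nonneg_left (hquad u) (by positivity)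
        _ = Real.pi * K * u ^ 2 := by ring
    have hbound := key_abs (hlipA u) hh2
    calc ‖_‖ * ‖g u‖
        ≤ (K * |u| + MA * (Real.pi * K * u ^ 2)) * ‖g u‖ :=
          mul_le_mul_of_nonneg_right hbound (norm_nonneg _)
      _ = K * (|u| * ‖g u‖) + K * Real.pi * MA * (|u| ^ 2 * ‖g u‖) := by
          rw [_root_.sq_abs u]; ring
  -- integrable bounds
  have hBi1 : Integrable (fun u : ℝ => |u| * ‖g u‖) := by
    have := g.integrable_pow_mul (volume) 1
    simpa [Real.norm_eq_abs] using this
  have hBi2 : Integrable (fun u : ℝ => |u| ^ 2 * ‖g u‖) := by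
    have := g.integrable_pow_mul (volume) 2
    simpa [Real.norm_eq_abs] using this
  have hB : Integrable (fun u : ℝ => K * (|u| * ‖g u‖)
      + K * Real.pi * MA * (|u| ^ 2 * ‖g u‖)) :=
    (hBi1.const_mul K).add (hBi2.const_mul (K * Real.pi * MA))
  rw [hchange, hQ, ← integral_sub hVi hQii]
  calc ‖∫ u : ℝ, (V u - Qi u)‖
      ≤ ∫ u : ℝ, (K * (|u| * ‖g u‖)
        + K * Real.pi * MA * (|u| ^ 2 * ‖g u‖)) :=
        norm_integral_le_of_norm_le hB (Filter.Eventually.of_forall key)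
    _ = K * I₁ + K * Real.pi * MA * I₂ := by
        rw [integral_add (hBi1.const_mul K) (hBi2.const_mul (K * Real.pi * MA)),
          integral_const_mul, integral_const_mul, hI₁, hI₂]
    _ = ε * Mφ' * (I₁ + Real.pi * MA * I₂) := by rw [hKdef]; ring
end

section
/- Under the same hypotheses as the previous lemma, the t-derivative of the STFT satisfies |(1/(2πi)) ∂_t V_g f(t,η) - φ'(t) Q(t,η)| ≤ ε‖φ'‖_∞ ( (1/(2π)) I₀ + (‖A‖_∞ + ‖φ'‖_∞) I₁ + π‖A‖_∞‖φ'‖_∞ I₂ ), for all (t,η), where I₀ = ∫|g(u)|du. -/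
open Complex MeasureTheory

noncomputable section

private lemma cnorm_ofReal (r : ℝ) : ‖(r : ℂ)‖ = |r| := by
  rw [Complex.norm_real, Real.norm_eq_abs]

private lemma lip_aux {h : ℝ → ℝ} (hd : Differentiable ℝ h) {C : ℝ}
    (hC : ∀ x, |deriv h x| ≤ C) (x y : ℝ) : |h x - h y| ≤ C * |x - y| := by
  simpa [Real.norm_eq_abs] using
    Convex.norm_image_sub_le_of_norm_deriv_le (s := (Set.univ : Set ℝ))
      (fun z _ => (hd z)) (fun z _ => hC z) convex_univ (Set.mem_univ y) (Set.mem_univ x)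

private lemma expI_lip (a b : ℝ) :
    norm (Complex.exp (a * Complex.I) - Complex.exp (b * Complex.I)) ≤ |a - b| := by
  have hd : ∀ z : ℝ, HasDerivAt (fun s : ℝ => Complex.exp (s * Complex.I))
      (Complex.exp (z * Complex.I) * Complex.I) z := by
    intro z
    have h1 : HasDerivAt (fun s : ℝ => (s : ℂ) * Complex.I) Complex.I z := by
      simpa using (hasDerivAt_id z).ofReal_comp.mul_const Complex.I
    simpa using h1.cexp
  have := Convex.norm_image_sub_le_of_norm_deriv_le (s := (Set.univ : Set ℝ))
      (f := fun s : ℝ => Complex.exp (s * Complex.I)) (C := 1)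
      (fun z _ => (hd z).differentiableAt)
      (fun z _ => by
        rw [(hd z).deriv]
        simp [Complex.norm_exp_ofReal_mul_I])
      convex_univ (Set.mem_univ b) (Set.mem_univ a)
  simpa [Real.norm_eq_abs] using this

private lemma abs_integral_abs_id (c : ℝ) : _root_.abs (∫ v in (0:ℝ)..c, |v|) = c ^ 2 / 2 := by
  rcases le_or_gt 0 c with h | h
  · rw [intervalIntegral.integral_congr (g := fun v : ℝ => v) ?_]
    · rw [integral_id, show (c ^ 2 - 0 ^ 2) / 2 = c ^ 2 / 2 by ring,
        _root_.abs_of_nonneg (by positivity)]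
    · intro v hv
      rw [Set.uIcc_of_le h] at hv
      exact abs_of_nonneg hv.1
  · rw [intervalIntegral.integral_congr (g := fun v : ℝ => -v) ?_]
    · rw [intervalIntegral.integral_neg, integral_id]
      rw [_root_.abs_of_nonpos (by nlinarith [sq_nonneg c])]
      ring
    · intro v hv
      rw [Set.uIcc_of_ge h.le] at hv
      exact abs_of_nonpos hv.2

private lemma taylor_aux {φ : ℝ → ℝ} (hφ : ContDiff ℝ 2 φ) {C : ℝ}
    (hC : ∀ x, |deriv (deriv φ) x| ≤ C) (t x : ℝ) :
    |φ x - φ t - deriv φ t * (x - t)| ≤ C / 2 * (x - t) ^ 2 := by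
  have hφ1 : Differentiable ℝ φ := hφ.differentiable two_ne_zero
  have hφ'c : ContDiff ℝ 1 (deriv φ) :=
    (contDiff_succ_iff_deriv.mp (show ContDiff ℝ (1+1) φ by norm_num [hφ])).2.2
  have hφ'd : Differentiable ℝ (deriv φ) := hφ'c.differentiable one_ne_zero
  set h : ℝ → ℝ := fun s => φ s - φ t - deriv φ t * (s - t) with hh
  have hd : ∀ s, HasDerivAt h (deriv φ s - deriv φ t) s := by
    intro s
    have := ((hφ1 s).hasDerivAt.sub_const (φ t)).sub
      (((hasDerivAt_id s).sub_const t).const_mul (deriv φ t))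
    simp only [mul_one] at this
    exact this
  have hderiv : deriv h = fun s => deriv φ s - deriv φ t := funext fun s => (hd s).deriv
  have hft : h x - h t = ∫ s in t..x, deriv h s := by
    rw [intervalIntegral.integral_deriv_eq_sub (fun s _ => (hd s).differentiableAt)]
    rw [hderiv]
    exact ((hφ'c.continuous.sub continuous_const).intervalIntegrable _ _)
  have hht : h t = 0 := by simp [h]
  have hb : ‖∫ s in t..x, deriv h s‖ ≤ _root_.abs (∫ s in t..x, C * |s - t|) := by
    apply intervalIntegral.norm_integral_le_abs_of_norm_le
    · filter_upwards with s
      rw [hderiv, Real.norm_eq_abs]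
      simpa using lip_aux hφ'd hC s t
    · apply IntervalIntegrable.const_mul
      exact (_root_.continuous_abs.comp (continuous_id.sub continuous_const)).intervalIntegrable _ _
  have hcomp : (∫ s in t..x, C * |s - t|) = C * ∫ v in (0:ℝ)..(x - t), |v| := by
    rw [intervalIntegral.integral_const_mul]
    congr 1
    have := intervalIntegral.integral_comp_sub_right (a := t) (b := x) (fun v => |v|) t
    simpa using this
  have hC0 : 0 ≤ C := le_trans (abs_nonneg _) (hC 0)
  calc |φ x - φ t - deriv φ t * (x - t)| = ‖h x - h t‖ := by rw [hht]; simp [h, Real.norm_eq_abs]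
    _ ≤ _root_.abs (∫ s in t..x, C * |s - t|) := by rw [hft]; exact hb
    _ = C * (x - t) ^ 2 / 2 := by
        rw [hcomp, abs_mul, _root_.abs_of_nonneg hC0, abs_integral_abs_id]; ring
    _ = C / 2 * (x - t) ^ 2 := by ring

private lemma abs_exp_two_pi_I (r : ℝ) :
    norm (Complex.exp (2 * Real.pi * Complex.I * (r : ℂ))) = 1 := by
  rw [show (2 * Real.pi * Complex.I * (r : ℂ)) = ((2 * Real.pi * r : ℝ) : ℂ) * Complex.I by
    push_cast; ring]
  exact Complex.norm_exp_ofReal_mul_I _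

private lemma key_split (a b c d q e1 e2 p : ℂ) (hp : p ≠ 0) :
    (1 / p) * ((a + p * b * c) * e1) - d * q * e2
      = (1 / p) * a * e1 + (b - d) * c * e1 + d * (c - q) * e1 + d * q * (e1 - e2) := by
  field_simp
  ring

private lemma pointwise_est (A φ : ℝ → ℝ) (hφ : ContDiff ℝ 2 φ)
    (hφ'd : Differentiable ℝ (deriv φ)) (hAdiff : Differentiable ℝ A)
    (ε MA Mφ' : ℝ)
    (hMA : ∀ x, |A x| ≤ MA) (hMφ' : ∀ x, |deriv φ x| ≤ Mφ')
    (hA' : ∀ x, |deriv A x| ≤ ε * Mφ')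
    (hφ'' : ∀ x, |deriv (deriv φ) x| ≤ ε * Mφ')
    (hεM : 0 ≤ ε * Mφ') (hMA0 : 0 ≤ MA) (hMφ'0 : 0 ≤ Mφ')
    (t u : ℝ) :
    norm ((1 / (2 * (Real.pi : ℂ) * Complex.I)) *
        (((Complex.ofReal (deriv A (u + t))) + 2 * Real.pi * Complex.I *
          (Complex.ofReal (deriv φ (u + t))) * (Complex.ofReal (A (u + t)))) *
          Complex.exp (2 * Real.pi * Complex.I * ((φ (u + t) : ℝ) : ℂ)))
        - (Complex.ofReal (deriv φ t) * Complex.ofReal (A t)) *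
          Complex.exp (2 * Real.pi * Complex.I * ((φ t + deriv φ t * u : ℝ) : ℂ)))
      ≤ ε * Mφ' * (1 / (2 * Real.pi)) + ε * Mφ' * MA * |u| + ε * Mφ' * Mφ' * |u|
        + ε * Mφ' * (Real.pi * MA * Mφ') * |u| ^ 2 := by
  have hπ : (0:ℝ) < Real.pi := Real.pi_pos
  have hp : (2 * (Real.pi : ℂ) * Complex.I) ≠ 0 :=
    mul_ne_zero (mul_ne_zero two_ne_zero (Complex.ofReal_ne_zero.mpr Real.pi_ne_zero))
      Complex.I_ne_zero
  have habs_inv : norm (1 / (2 * (Real.pi : ℂ) * Complex.I)) = 1 / (2 * Real.pi) := by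
    rw [norm_div]
    simp [Complex.norm_two, Complex.norm_I, cnorm_ofReal, _root_.abs_of_nonneg hπ.le]
  rw [key_split (Complex.ofReal (deriv A (u + t))) (Complex.ofReal (deriv φ (u + t)))
      (Complex.ofReal (A (u + t))) (Complex.ofReal (deriv φ t)) (Complex.ofReal (A t))
      (Complex.exp (2 * Real.pi * Complex.I * ((φ (u + t) : ℝ) : ℂ)))
      (Complex.exp (2 * Real.pi * Complex.I * ((φ t + deriv φ t * u : ℝ) : ℂ)))
      (2 * (Real.pi : ℂ) * Complex.I) hp]
  have hxu : u + t - t = u := by ring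
  have b0 : norm ((1 / (2 * (Real.pi : ℂ) * Complex.I)) *
      Complex.ofReal (deriv A (u + t)) *
      Complex.exp (2 * Real.pi * Complex.I * ((φ (u + t) : ℝ) : ℂ)))
      ≤ ε * Mφ' * (1 / (2 * Real.pi)) := by
    rw [norm_mul, norm_mul, abs_exp_two_pi_I, mul_one, habs_inv, cnorm_ofReal]
    have h1 := hA' (u + t)
    have h3 : (0:ℝ) < 1 / (2 * Real.pi) := by positivity
    nlinarith
  have b1 : norm ((Complex.ofReal (deriv φ (u + t)) - Complex.ofReal (deriv φ t)) *
      Complex.ofReal (A (u + t)) *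
      Complex.exp (2 * Real.pi * Complex.I * ((φ (u + t) : ℝ) : ℂ)))
      ≤ ε * Mφ' * MA * |u| := by
    rw [norm_mul, norm_mul, abs_exp_two_pi_I, mul_one, ← Complex.ofReal_sub,
      cnorm_ofReal, cnorm_ofReal]
    have hl : |deriv φ (u + t) - deriv φ t| ≤ ε * Mφ' * |u| := by
      have := lip_aux hφ'd hφ'' (u + t) t
      rwa [hxu] at this
    calc |deriv φ (u + t) - deriv φ t| * |A (u + t)| ≤ (ε * Mφ' * |u|) * MA :=
          mul_le_mul hl (hMA _) (abs_nonneg _) (mul_nonneg hεM (abs_nonneg _))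
      _ = ε * Mφ' * MA * |u| := by ring
  have b2 : norm (Complex.ofReal (deriv φ t) *
      (Complex.ofReal (A (u + t)) - Complex.ofReal (A t)) *
      Complex.exp (2 * Real.pi * Complex.I * ((φ (u + t) : ℝ) : ℂ)))
      ≤ ε * Mφ' * Mφ' * |u| := by
    rw [norm_mul, norm_mul, abs_exp_two_pi_I, mul_one, ← Complex.ofReal_sub,
      cnorm_ofReal, cnorm_ofReal]
    have hl : |A (u + t) - A t| ≤ ε * Mφ' * |u| := by
      have := lip_aux hAdiff hA' (u + t) t
      rwa [hxu] at this
    calc |deriv φ t| * |A (u + t) - A t| ≤ Mφ' * (ε * Mφ' * |u|) :=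
          mul_le_mul (hMφ' t) hl (abs_nonneg _) hMφ'0
      _ = ε * Mφ' * Mφ' * |u| := by ring
  have b3 : norm (Complex.ofReal (deriv φ t) * Complex.ofReal (A t) *
      (Complex.exp (2 * Real.pi * Complex.I * ((φ (u + t) : ℝ) : ℂ))
        - Complex.exp (2 * Real.pi * Complex.I * ((φ t + deriv φ t * u : ℝ) : ℂ))))
      ≤ ε * Mφ' * (Real.pi * MA * Mφ') * |u| ^ 2 := by
    rw [norm_mul, norm_mul, cnorm_ofReal, cnorm_ofReal]
    have hee : norm (Complex.exp (2 * Real.pi * Complex.I * ((φ (u + t) : ℝ) : ℂ))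
        - Complex.exp (2 * Real.pi * Complex.I * ((φ t + deriv φ t * u : ℝ) : ℂ)))
        ≤ 2 * Real.pi * (ε * Mφ' / 2 * u ^ 2) := by
      have h1 : Complex.exp (2 * Real.pi * Complex.I * ((φ (u + t) : ℝ) : ℂ))
          = Complex.exp (((2 * Real.pi * φ (u + t) : ℝ) : ℂ) * Complex.I) := by
        congr 1
        push_cast
        ring
      have h2 : Complex.exp (2 * Real.pi * Complex.I * ((φ t + deriv φ t * u : ℝ) : ℂ))
          = Complex.exp (((2 * Real.pi * (φ t + deriv φ t * u) : ℝ) : ℂ) * Complex.I) := by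
        congr 1
        push_cast
        ring
      rw [h1, h2]
      refine le_trans (expI_lip _ _) ?_
      have htay := taylor_aux hφ hφ'' t (u + t)
      rw [hxu] at htay
      calc |2 * Real.pi * φ (u + t) - 2 * Real.pi * (φ t + deriv φ t * u)|
          = 2 * Real.pi * |φ (u + t) - φ t - deriv φ t * u| := by
            rw [show 2 * Real.pi * φ (u + t) - 2 * Real.pi * (φ t + deriv φ t * u)
              = 2 * Real.pi * (φ (u + t) - φ t - deriv φ t * u) by ring, abs_mul,
              _root_.abs_of_nonneg (by positivity)]
        _ ≤ 2 * Real.pi * (ε * Mφ' / 2 * u ^ 2) :=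
            mul_le_mul_of_nonneg_left htay (by positivity)
    have h1 : |deriv φ t| * |A t| ≤ Mφ' * MA :=
      mul_le_mul (hMφ' t) (hMA t) (abs_nonneg _) hMφ'0
    calc |deriv φ t| * |A t| * norm (Complex.exp (2 * Real.pi * Complex.I *
          ((φ (u + t) : ℝ) : ℂ)) - Complex.exp (2 * Real.pi * Complex.I *
          ((φ t + deriv φ t * u : ℝ) : ℂ)))
        ≤ (Mφ' * MA) * (2 * Real.pi * (ε * Mφ' / 2 * u ^ 2)) :=
          mul_le_mul h1 hee (norm_nonneg _) (mul_nonneg hMφ'0 hMA0)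
      _ = ε * Mφ' * (Real.pi * MA * Mφ') * |u| ^ 2 := by rw [_root_.sq_abs]; ring
  refine le_trans (norm_add_le _ _) (le_trans (add_le_add_left
    (norm_add_le _ _) _) (le_trans (add_le_add_left (add_le_add_left
    (norm_add_le _ _) _) _) ?_))
  exact add_le_add (add_le_add (add_le_add b0 b1) b2) b3

set_option maxHeartbeats 1000000 in
/-- Under the same hypotheses as Lemma 3.6's first bound, the `t`-derivative of the
modified STFT satisfies
`|(1/(2πi)) ∂ₜ V_g f(t,η) - φ'(t) Q(t,η)|
  ≤ ε‖φ'‖∞ ((1/(2π)) I₀ + (‖A‖∞ + ‖φ'‖∞) I₁ + π‖A‖∞‖φ'‖∞ I₂)`. -/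
theorem stft_deriv_approx_Q
    (A φ : ℝ → ℝ) (hA : ContDiff ℝ 1 A) (hφ : ContDiff ℝ 2 φ)
    (hApos : ∀ x, 0 < A x) (hφ'pos : ∀ x, 0 < deriv φ x)
    (ε MA Mφ' : ℝ) (hε : 0 < ε)
    (hMA : ∀ x, |A x| ≤ MA) (hMφ' : ∀ x, |deriv φ x| ≤ Mφ')
    (hA' : ∀ x, |deriv A x| ≤ ε * Mφ')
    (hφ'' : ∀ x, |deriv (deriv φ) x| ≤ ε * Mφ')
    (g : SchwartzMap ℝ ℂ)
    (I₀ I₁ I₂ : ℝ)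
    (hI₀ : I₀ = ∫ u : ℝ, ‖g u‖)
    (hI₁ : I₁ = ∫ u : ℝ, |u| * ‖g u‖)
    (hI₂ : I₂ = ∫ u : ℝ, |u| ^ 2 * ‖g u‖) :
    ∀ t η : ℝ,
      norm
        ((1 / (2 * Real.pi * Complex.I)) *
            deriv (fun s : ℝ =>
              ∫ x : ℝ, ((A x : ℂ) * Complex.exp (2 * Real.pi * Complex.I * (φ x : ℂ))) *
                g (x - s) *
                Complex.exp (-(2 * Real.pi * Complex.I * (η : ℂ) * ((x : ℂ) - s)))) t
          - Complex.ofReal (deriv φ t) *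
              ((A t : ℂ) * Complex.exp (2 * Real.pi * Complex.I * (φ t : ℂ)) *
                FourierTransform.fourier (fun u => g u : ℝ → ℂ) (η - deriv φ t)))
        ≤ ε * Mφ' * ((1 / (2 * Real.pi)) * I₀ + (MA + Mφ') * I₁
            + Real.pi * MA * Mφ' * I₂) := by
  intro t η
  have hπ : (0:ℝ) < Real.pi := Real.pi_pos
  have hεM : 0 ≤ ε * Mφ' := le_trans (abs_nonneg _) (hA' 0)
  have hMA0 : 0 ≤ MA := le_trans (abs_nonneg _) (hMA 0)
  have hMφ'0 : 0 ≤ Mφ' := le_trans (abs_nonneg _) (hMφ' 0)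
  set f : ℝ → ℂ := fun x => (A x : ℂ) * Complex.exp (2 * Real.pi * Complex.I * (φ x : ℂ))
    with hf_def
  set f' : ℝ → ℂ := fun x => ((Complex.ofReal (deriv A x)) + 2 * Real.pi * Complex.I *
      (Complex.ofReal (deriv φ x)) * (Complex.ofReal (A x)))
      * Complex.exp (2 * Real.pi * Complex.I * (φ x : ℂ)) with hf'_def
  have hAd : ∀ x, HasDerivAt A (deriv A x) x := fun x => (hA.differentiable one_ne_zero x).hasDerivAt
  have hφd : ∀ x, HasDerivAt φ (deriv φ x) x := fun x => (hφ.differentiable two_ne_zero x).hasDerivAt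
  have hf : ∀ x, HasDerivAt f (f' x) x := by
    intro x
    have h1 : HasDerivAt (fun y : ℝ => ((A y : ℂ))) (Complex.ofReal (deriv A x)) x :=
      (hAd x).ofReal_comp
    have h2 : HasDerivAt (fun y : ℝ => ((φ y : ℂ))) (Complex.ofReal (deriv φ x)) x :=
      (hφd x).ofReal_comp
    have h3 : HasDerivAt (fun y : ℝ => Complex.exp (2 * Real.pi * Complex.I * (φ y : ℂ)))
        (2 * Real.pi * Complex.I * (Complex.ofReal (deriv φ x))
          * Complex.exp (2 * Real.pi * Complex.I * (φ x : ℂ))) x := by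
      have := (h2.const_mul ((2 : ℂ) * Real.pi * Complex.I)).cexp
      convert this using 1
      ring
    have := h1.mul h3
    rw [hf'_def]
    convert this using 1
    · rfl
    · rfl
    push_cast
    ring
  have hf'_bound : ∀ x, norm (f' x) ≤ ε * Mφ' + 2 * Real.pi * Mφ' * MA := by
    intro x
    rw [hf'_def]
    simp only [norm_mul, abs_exp_two_pi_I, mul_one]
    calc norm ((Complex.ofReal (deriv A x)) + 2 * Real.pi * Complex.I *
            (Complex.ofReal (deriv φ x)) * (Complex.ofReal (A x)))
        ≤ norm ((Complex.ofReal (deriv A x)))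
          + norm (2 * Real.pi * Complex.I * (Complex.ofReal (deriv φ x)) *
              (Complex.ofReal (A x))) := norm_add_le _ _
      _ ≤ ε * Mφ' + 2 * Real.pi * Mφ' * MA := by
          apply add_le_add
          · simpa using hA' x
          · simp only [norm_mul, cnorm_ofReal, Complex.norm_I, Complex.norm_two, mul_one]
            have h1 := hMφ' x
            have h2 := hMA x
            rw [_root_.abs_of_nonneg hπ.le]
            have h3 : |deriv φ x| * |A x| ≤ Mφ' * MA :=
              mul_le_mul h1 h2 (abs_nonneg _) ((abs_nonneg _).trans h1)
            nlinarith [h3]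
  -- continuity facts
  have hA'c : Continuous (deriv A) := hA.continuous_deriv le_rfl
  have hφ'c : Continuous (deriv φ) := hφ.continuous_deriv one_le_two
  have cexp_cont : ∀ ψ : ℝ → ℝ, Continuous ψ →
      Continuous (fun x : ℝ => Complex.exp (2 * Real.pi * Complex.I * (ψ x : ℂ))) :=
    fun ψ hψ => Complex.continuous_exp.comp (continuous_const.mul (continuous_ofReal.comp hψ))
  have hfc : Continuous f := (continuous_ofReal.comp hA.continuous).mul
    (cexp_cont φ hφ.continuous)
  have hf'c : Continuous f' := ((continuous_ofReal.comp hA'c).add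
    ((continuous_const.mul (continuous_ofReal.comp hφ'c)).mul
      (continuous_ofReal.comp hA.continuous))).mul (cexp_cont φ hφ.continuous)
  set eη : ℝ → ℂ := fun u => Complex.exp (-(2 * Real.pi * Complex.I * (η : ℂ) * (u : ℂ)))
    with heη_def
  have heηc : Continuous eη := Complex.continuous_exp.comp
    ((continuous_const.mul continuous_ofReal).neg)
  have heη_abs : ∀ u : ℝ, norm (eη u) = 1 := by
    intro u
    rw [heη_def]
    simp only
    rw [show -(2 * Real.pi * Complex.I * (η : ℂ) * (u : ℂ))
      = ((-(2 * Real.pi * η * u) : ℝ) : ℂ) * Complex.I by push_cast; ring]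
    exact Complex.norm_exp_ofReal_mul_I _
  -- change of variables
  have key : (fun s : ℝ => ∫ x : ℝ, f x * g (x - s) *
      Complex.exp (-(2 * Real.pi * Complex.I * (η : ℂ) * ((x : ℂ) - s)))) =
      fun s => ∫ u : ℝ, f (u + s) * g u * eη u := by
    funext s
    rw [← MeasureTheory.integral_add_right_eq_self (μ := volume)
      (fun x : ℝ => f x * g (x - s) *
        Complex.exp (-(2 * Real.pi * Complex.I * (η : ℂ) * ((x : ℂ) - s)))) s]
    congr 1
    funext u
    rw [heη_def]
    simp only [add_sub_cancel_right]
    congr 2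
    push_cast
    ring
  -- bounded-by-g integrability criterion
  have hbd_int : ∀ (h : ℝ → ℂ) (c : ℝ), Continuous h →
      (∀ u, norm (h u) ≤ c * norm (g u)) → Integrable h := by
    intro h c hc hb
    apply (((g.integrable (μ := volume)).norm.const_mul c)).mono' hc.aestronglyMeasurable
    filter_upwards with u
    simpa using hb u
  -- derivative under the integral sign
  have hderiv : HasDerivAt (fun s => ∫ u : ℝ, f (u + s) * g u * eη u)
      (∫ u : ℝ, f' (u + t) * g u * eη u) t := by
    have := (hasDerivAt_integral_of_dominated_loc_of_deriv_le (μ := volume)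
      (F := fun (s : ℝ) (u : ℝ) => f (u + s) * g u * eη u)
      (F' := fun (s : ℝ) (u : ℝ) => f' (u + s) * g u * eη u)
      (x₀ := t)
      (bound := fun u => (ε * Mφ' + 2 * Real.pi * Mφ' * MA) * norm (g u))
      (s := Metric.ball t 1) (Metric.ball_mem_nhds t one_pos)
      ?_ ?_ ?_ ?_ ?_ ?_).2
    · exact this
    · filter_upwards with s
      exact (((hfc.comp (continuous_id.add continuous_const)).mul g.continuous).mul
        heηc).aestronglyMeasurable
    · apply hbd_int _ MA
      · exact ((hfc.comp (continuous_id.add continuous_const)).mul g.continuous).mul heηc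
      · intro u
        simp only [norm_mul, heη_abs, mul_one, hf_def]
        rw [abs_exp_two_pi_I, cnorm_ofReal, mul_one]
        exact mul_le_mul_of_nonneg_right (hMA (u + t)) (norm_nonneg (g u))
    · exact (((hf'c.comp (continuous_id.add continuous_const)).mul g.continuous).mul
        heηc).aestronglyMeasurable
    · filter_upwards with u
      intro s _
      simp only [norm_mul, heη_abs, mul_one]
      exact mul_le_mul_of_nonneg_right (hf'_bound (u + s)) (norm_nonneg (g u))
    · exact (g.integrable (μ := volume)).norm.const_mul _
    · filter_upwards with u
      intro s _
      have h1 : HasDerivAt (fun s : ℝ => u + s) 1 s := by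
        simpa using (hasDerivAt_id s).const_add u
      have h2 : HasDerivAt (fun s : ℝ => f (u + s)) (f' (u + s)) s := by
        have := HasDerivAt.scomp (𝕜 := ℝ) s (hf (u + s)) h1
        rw [one_smul] at this
        exact this
      simpa using (h2.mul_const (g u)).mul_const (eη u)
  rw [key, hderiv.deriv]
  -- notation / bookkeeping
  have hφ'cd : ContDiff ℝ 1 (deriv φ) :=
    (contDiff_succ_iff_deriv.mp (show ContDiff ℝ (1+1) φ by norm_num [hφ])).2.2
  have hφ'd : Differentiable ℝ (deriv φ) := hφ'cd.differentiable one_ne_zero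
  have hAdiff : Differentiable ℝ A := hA.differentiable one_ne_zero
  set e₂ : ℝ → ℂ := fun u => Complex.exp (2 * Real.pi * Complex.I *
    ((φ t + deriv φ t * u : ℝ) : ℂ)) with he₂_def
  have he₂c : Continuous e₂ := cexp_cont _ (continuous_const.add (continuous_const.mul
    continuous_id))
  have hexp2 : ∀ v : ℝ, Complex.exp (2 * Real.pi * Complex.I * (φ t : ℂ)) *
      Complex.exp (((-2 * Real.pi * v * (η - deriv φ t) : ℝ) : ℂ) * Complex.I)
      = e₂ v * eη v := by
    intro v
    rw [he₂_def, heη_def]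
    simp only
    rw [← Complex.exp_add, ← Complex.exp_add]
    congr 1
    push_cast
    ring
  have hFI : Complex.ofReal (deriv φ t) *
      ((A t : ℂ) * Complex.exp (2 * Real.pi * Complex.I * (φ t : ℂ)) *
        FourierTransform.fourier (fun u => g u : ℝ → ℂ) (η - deriv φ t))
      = ∫ u : ℝ, (Complex.ofReal (deriv φ t) * Complex.ofReal (A t)) *
          (e₂ u * eη u * g u) := by
    rw [Real.fourier_real_eq_integral_exp_smul]
    rw [← integral_const_mul, ← integral_const_mul]
    congr 1
    funext v
    rw [smul_eq_mul]
    linear_combination (Complex.ofReal (deriv φ t) * Complex.ofReal (A t) * (g v)) * (hexp2 v)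
  rw [hFI, ← integral_const_mul]
  have habs_inv : norm (1 / (2 * (Real.pi : ℂ) * Complex.I)) = 1 / (2 * Real.pi) := by
    rw [norm_div]
    simp [Complex.norm_two, Complex.norm_I, cnorm_ofReal, _root_.abs_of_nonneg hπ.le]
  have intA : Integrable (fun u : ℝ =>
      (1 / (2 * (Real.pi : ℂ) * Complex.I)) * (f' (u + t) * g u * eη u)) := by
    apply hbd_int _ ((1 / (2 * Real.pi)) * (ε * Mφ' + 2 * Real.pi * Mφ' * MA))
    · exact continuous_const.mul (((hf'c.comp (continuous_id.add continuous_const)).mul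
        g.continuous).mul heηc)
    · intro u
      simp only [norm_mul, heη_abs, mul_one, habs_inv]
      have h1 := hf'_bound (u + t)
      have h2 := norm_nonneg (g u)
      have h3 : (0:ℝ) < 1 / (2 * Real.pi) := by positivity
      nlinarith [mul_le_mul_of_nonneg_right h1 h2]
  have intB : Integrable (fun u : ℝ =>
      (Complex.ofReal (deriv φ t) * Complex.ofReal (A t)) * (e₂ u * eη u * g u)) := by
    apply hbd_int _ (Mφ' * MA)
    · exact continuous_const.mul ((he₂c.mul heηc).mul g.continuous)
    · intro u
      rw [he₂_def]
      simp only [norm_mul, heη_abs, mul_one, cnorm_ofReal, abs_exp_two_pi_I, one_mul]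
      have h1 : |deriv φ t| * |A t| ≤ Mφ' * MA :=
        mul_le_mul (hMφ' t) (hMA t) (abs_nonneg _) hMφ'0
      nlinarith [mul_le_mul_of_nonneg_right h1 (norm_nonneg (g u)),
        norm_nonneg (g u)]
  rw [← integral_sub intA intB]
  -- pointwise estimate
  have hp : (2 * (Real.pi : ℂ) * Complex.I) ≠ 0 :=
    mul_ne_zero (mul_ne_zero two_ne_zero (Complex.ofReal_ne_zero.mpr Real.pi_ne_zero))
      Complex.I_ne_zero
  have hpt : ∀ u : ℝ,
      norm ((1 / (2 * (Real.pi : ℂ) * Complex.I)) * f' (u + t)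
          - (Complex.ofReal (deriv φ t) * Complex.ofReal (A t)) * e₂ u)
        ≤ ε * Mφ' * (1 / (2 * Real.pi)) + ε * Mφ' * MA * |u| + ε * Mφ' * Mφ' * |u|
          + ε * Mφ' * (Real.pi * MA * Mφ') * |u| ^ 2 := by
    intro u
    simp only [hf'_def, he₂_def]
    exact pointwise_est A φ hφ hφ'd hAdiff ε MA Mφ' hMA hMφ' hA' hφ'' hεM hMA0 hMφ'0 t u
  -- integrable bound function
  have hint0 : Integrable (fun u : ℝ => norm (g u)) := by
    simpa using (g.integrable (μ := volume)).norm
  have hint1 : Integrable (fun u : ℝ => |u| * norm (g u)) := by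
    simpa [Real.norm_eq_abs, pow_one] using g.integrable_pow_mul volume 1
  have hint2 : Integrable (fun u : ℝ => |u| ^ 2 * norm (g u)) := by
    simpa [Real.norm_eq_abs] using g.integrable_pow_mul volume 2
  set B : ℝ → ℝ := fun u => ε * Mφ' * (1 / (2 * Real.pi)) * norm (g u)
      + ε * Mφ' * (MA + Mφ') * (|u| * norm (g u))
      + ε * Mφ' * (Real.pi * MA * Mφ') * (|u| ^ 2 * norm (g u)) with hB_def
  have hBint : Integrable B := ((hint0.const_mul _).add (hint1.const_mul _)).add
    (hint2.const_mul _)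
  have hnorm : ‖∫ u : ℝ, ((1 / (2 * (Real.pi : ℂ) * Complex.I)) * (f' (u + t) * g u * eη u)
      - (Complex.ofReal (deriv φ t) * Complex.ofReal (A t)) * (e₂ u * eη u * g u))‖
      ≤ ∫ u : ℝ, B u := by
    apply norm_integral_le_of_norm_le hBint
    filter_upwards with u
    have hfact : (1 / (2 * (Real.pi : ℂ) * Complex.I)) * (f' (u + t) * g u * eη u)
        - (Complex.ofReal (deriv φ t) * Complex.ofReal (A t)) * (e₂ u * eη u * g u)
        = ((1 / (2 * (Real.pi : ℂ) * Complex.I)) * f' (u + t)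
          - (Complex.ofReal (deriv φ t) * Complex.ofReal (A t)) * e₂ u) * (eη u * g u) := by
      ring
    rw [hfact, norm_mul, norm_mul, heη_abs, one_mul]
    calc norm _ * norm (g u)
        ≤ (ε * Mφ' * (1 / (2 * Real.pi)) + ε * Mφ' * MA * |u| + ε * Mφ' * Mφ' * |u|
          + ε * Mφ' * (Real.pi * MA * Mφ') * |u| ^ 2) * norm (g u) :=
          mul_le_mul_of_nonneg_right (hpt u) (norm_nonneg _)
      _ = B u := by rw [hB_def]; ring
  have hBeq : ∫ u : ℝ, B u = ε * Mφ' * ((1 / (2 * Real.pi)) * I₀ + (MA + Mφ') * I₁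
      + Real.pi * MA * Mφ' * I₂) := by
    have hi01 : Integrable (fun u : ℝ => ε * Mφ' * (1 / (2 * Real.pi)) * norm (g u)
        + ε * Mφ' * (MA + Mφ') * (|u| * norm (g u))) :=
      (hint0.const_mul _).add (hint1.const_mul _)
    rw [hB_def]
    simp only
    rw [integral_add hi01 (hint2.const_mul _),
      integral_add (hint0.const_mul _) (hint1.const_mul _),
      integral_const_mul, integral_const_mul, integral_const_mul, ← hI₀, ← hI₁, ← hI₂]
    ring
  calc norm _ = ‖∫ u : ℝ, ((1 / (2 * (Real.pi : ℂ) * Complex.I)) *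
        (f' (u + t) * g u * eη u)
        - (Complex.ofReal (deriv φ t) * Complex.ofReal (A t)) * (e₂ u * eη u * g u))‖ :=
        rfl
    _ ≤ ∫ u : ℝ, B u := hnorm
    _ = _ := hBeq
end
end

section
/- Let f(t) = Σ_{k=1}^K A_k(t)e^{2πiφ_k(t)} be a sum of IMFs whose instantaneous frequencies are separated by d > 0 (inf_t φ'_k(t) - sup_t φ'_{k-1}(t) > d for all k), and let g be Schwartz with supp(ĝ) ⊂ [-d/2, d/2]. If (t,η) satisfies |η - φ'_k(t)| ≥ d/2 for every k, then |V_g f(t,η)| ≤ Σ_{k=1}^K ε‖φ'_k‖_∞ (I₁ + π‖A_k‖_∞ I₂). -/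
open Complex MeasureTheory


lemma lip_aux_s4 {E : Type*} [NormedAddCommGroup E] [NormedSpace ℝ E] {f : ℝ → E}
    (hf : Differentiable ℝ f) {M : ℝ} (hM : ∀ x, ‖deriv f x‖ ≤ M) (x y : ℝ) :
    ‖f y - f x‖ ≤ M * |y - x| := by
  simpa using Convex.norm_image_sub_le_of_norm_deriv_le (fun z _ => (hf z)) (fun z _ => hM z)
    convex_univ (Set.mem_univ x) (Set.mem_univ y)

lemma taylor_bound {φ : ℝ → ℝ} (hφ : ContDiff ℝ 2 φ) {M : ℝ}
    (hM : ∀ x, |deriv (deriv φ) x| ≤ M) (t x : ℝ) :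
    |φ x - φ t - deriv φ t * (x - t)| ≤ M / 2 * (x - t) ^ 2 := by
  have hM0 : 0 ≤ M := (abs_nonneg _).trans (hM 0)
  have h2 : ContDiff ℝ (1 + 1) φ := by norm_num; exact hφ
  have hφ1 : ContDiff ℝ 1 (deriv φ) := (contDiff_succ_iff_deriv.mp h2).2.2
  have hφd : Differentiable ℝ φ := (contDiff_succ_iff_deriv.mp h2).1
  have hφ'd : Differentiable ℝ (deriv φ) := hφ1.differentiable one_ne_zero
  have hlip : ∀ s : ℝ, |deriv φ s - deriv φ t| ≤ M * |s - t| := by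
    intro s
    simpa [Real.norm_eq_abs] using lip_aux_s4 hφ'd (fun z => by simpa [Real.norm_eq_abs] using hM z) t s
  have hcont : Continuous (deriv φ) := hφ1.continuous
  have hftc : ∫ s in t..x, deriv φ s = φ x - φ t :=
    intervalIntegral.integral_deriv_eq_sub (fun s _ => hφd s)
      (hcont.intervalIntegrable t x)
  have hint1 : IntervalIntegrable (fun s => deriv φ s) volume t x := hcont.intervalIntegrable t x
  have hint2 : IntervalIntegrable (fun _ : ℝ => deriv φ t) volume t x :=
    intervalIntegrable_const
  have key : φ x - φ t - deriv φ t * (x - t) = ∫ s in t..x, (deriv φ s - deriv φ t) := by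
    rw [intervalIntegral.integral_sub hint1 hint2, hftc, intervalIntegral.integral_const]
    simp [smul_eq_mul]; ring
  rw [key]
  have habs : ∫ u in (0:ℝ)..(x - t), |u| = (x - t) * |x - t| / 2 := by
    rcases le_or_gt 0 (x - t) with h | h
    · rw [intervalIntegral.integral_congr (g := fun u => u)]
      · rw [integral_id, _root_.abs_of_nonneg h]; ring
      · intro u hu
        rw [Set.uIcc_of_le h] at hu
        exact abs_of_nonneg hu.1
    · rw [intervalIntegral.integral_congr (g := fun u => -u)]
      · rw [intervalIntegral.integral_neg, integral_id, abs_of_neg h]; ring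
      · intro u hu
        rw [Set.uIcc_of_ge h.le] at hu
        exact abs_of_nonpos hu.2
  have hbd : ‖∫ s in t..x, (deriv φ s - deriv φ t)‖ ≤ |∫ s in t..x, M * (|s - t|)| := by
    apply intervalIntegral.norm_integral_le_abs_of_norm_le
    · filter_upwards with s using (by simpa [Real.norm_eq_abs] using hlip s)
    · exact (Continuous.intervalIntegrable (by continuity) t x)
  have hcomp : ∫ s in t..x, M * (|s - t|) = M * ((x - t) * |x - t| / 2) := by
    rw [intervalIntegral.integral_const_mul]
    rw [show (fun s : ℝ => |s - t|) = (fun s : ℝ => (fun u : ℝ => |u|) (s - t)) from rfl]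
    rw [intervalIntegral.integral_comp_sub_right (fun u : ℝ => |u|) t, sub_self, habs]
  rw [Real.norm_eq_abs] at hbd
  refine hbd.trans ?_
  rw [hcomp, abs_mul, _root_.abs_of_nonneg hM0]
  rcases abs_cases ((x - t) * |x - t| / 2) with ⟨h1, _⟩ | ⟨h1, _⟩ <;>
    rcases abs_cases (x - t) with ⟨h3, _⟩ | ⟨h3, _⟩ <;> rw [h1, h3] <;>
    nlinarith [sq_nonneg (x - t), hM0]


lemma fourier_vanish (g : SchwartzMap ℝ ℂ) {c ξ : ℝ}
    (hg : Function.support (fun ζ => FourierTransform.fourier (fun u : ℝ => g u) ζ)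
      ⊆ Set.Icc (-c) c)
    (hξ : c ≤ |ξ|) : FourierTransform.fourier (fun u : ℝ => g u) ξ = 0 := by
  set G : ℝ → ℂ := fun ζ => FourierTransform.fourier (fun u : ℝ => g u) ζ with hG
  have hGc : Continuous G := by
    have h := (SchwartzMap.fourierTransformCLM ℝ (E := ℂ) g).continuous
    rw [show ⇑(SchwartzMap.fourierTransformCLM ℝ (E := ℂ) g) = G from rfl] at h
    exact h
  have hzero : ∀ ζ : ℝ, c < |ζ| → G ζ = 0 := by
    intro ζ hζ
    by_contra hne
    have := hg hne
    rw [Set.mem_Icc, ← abs_le] at this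
    linarith
  rcases le_abs.mp hξ with h | h
  · have h1 : Filter.Tendsto G (nhdsWithin ξ (Set.Ioi ξ)) (nhds (G ξ)) :=
      (hGc.tendsto ξ).mono_left nhdsWithin_le_nhds
    have h2 : ∀ᶠ ζ in nhdsWithin ξ (Set.Ioi ξ), G ζ = 0 := by
      filter_upwards [eventually_mem_nhdsWithin] with ζ hζ
      exact hzero ζ (lt_of_lt_of_le (lt_of_le_of_lt h hζ) (le_abs_self ζ))
    exact tendsto_nhds_unique (h1.congr' h2) tendsto_const_nhds
  · have h1 : Filter.Tendsto G (nhdsWithin ξ (Set.Iio ξ)) (nhds (G ξ)) :=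
      (hGc.tendsto ξ).mono_left nhdsWithin_le_nhds
    have h2 : ∀ᶠ ζ in nhdsWithin ξ (Set.Iio ξ), G ζ = 0 := by
      filter_upwards [eventually_mem_nhdsWithin] with ζ hζ
      have : c < -ζ := lt_of_le_of_lt (by linarith [h] : c ≤ -ξ) (by simpa using hζ)
      exact hzero ζ (lt_of_lt_of_le this (neg_le_abs ζ))
    exact tendsto_nhds_unique (h1.congr' h2) tendsto_const_nhds

lemma exp_I_lip (a b : ℝ) :
    ‖Complex.exp ((a:ℂ) * Complex.I) - Complex.exp ((b:ℂ) * Complex.I)‖ ≤ |a - b| := by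
  have hder : ∀ x : ℝ, HasDerivAt (fun x : ℝ => Complex.exp ((x:ℂ) * Complex.I))
      (Complex.exp ((x:ℂ) * Complex.I) * Complex.I) x := by
    intro x
    have h1 : HasDerivAt (fun x : ℝ => (x:ℂ)) 1 x := Complex.ofRealCLM.hasDerivAt
    simpa using ((h1.mul_const Complex.I).cexp)
  have hd : Differentiable ℝ (fun x : ℝ => Complex.exp ((x:ℂ) * Complex.I)) :=
    fun x => (hder x).differentiableAt
  have hM : ∀ x : ℝ, ‖deriv (fun x : ℝ => Complex.exp ((x:ℂ) * Complex.I)) x‖ ≤ 1 := by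
    intro x
    rw [(hder x).deriv]
    simp [Complex.norm_exp]
  simpa using lip_aux_s4 hd hM b a


lemma component_bound (A φ : ℝ → ℝ) (hA : ContDiff ℝ 1 A) (hφ : ContDiff ℝ 2 φ)
    (MA C : ℝ) (hMA : ∀ x, |A x| ≤ MA) (hA' : ∀ x, |deriv A x| ≤ C)
    (hφ'' : ∀ x, |deriv (deriv φ) x| ≤ C)
    (g : SchwartzMap ℝ ℂ) (t η : ℝ)
    (hzero : FourierTransform.fourier (fun u : ℝ => g u) (η - deriv φ t) = 0) :
    ‖∫ x : ℝ, (A x : ℂ) * Complex.exp (2 * Real.pi * Complex.I * (φ x : ℂ)) *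
        g (x - t) * Complex.exp (-(2 * Real.pi * Complex.I * (η : ℂ) * ((x : ℂ) - t)))‖
      ≤ C * (∫ u : ℝ, ‖u‖ ^ 1 * ‖g u‖) + Real.pi * MA * C * (∫ u : ℝ, ‖u‖ ^ 2 * ‖g u‖) := by
  have hC0 : 0 ≤ C := (abs_nonneg _).trans (hA' 0)
  have hMA0 : 0 ≤ MA := (abs_nonneg _).trans (hMA 0)
  have hπ : (0:ℝ) < Real.pi := Real.pi_pos
  set c' : ℝ := deriv φ t with hc'
  set G : ℝ → ℂ := fun x => (A x : ℂ) * Complex.exp (2 * Real.pi * Complex.I * (φ x : ℂ)) *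
      g (x - t) * Complex.exp (-(2 * Real.pi * Complex.I * (η : ℂ) * ((x : ℂ) - t))) with hG
  set P : ℝ → ℂ := fun x => (A t : ℂ) *
      Complex.exp (2 * Real.pi * Complex.I * ((φ t + c' * (x - t) : ℝ) : ℂ)) *
      g (x - t) * Complex.exp (-(2 * Real.pi * Complex.I * (η : ℂ) * ((x : ℂ) - t))) with hP
  -- absolute values of the unimodular factors
  have habs1 : ∀ θ : ℝ, ‖Complex.exp (2 * Real.pi * Complex.I * (θ : ℂ))‖ = 1 := by
    intro θ
    rw [show (2 * Real.pi * Complex.I * (θ:ℂ)) = ((2 * Real.pi * θ : ℝ):ℂ) * Complex.I by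
      push_cast; ring]
    exact Complex.norm_exp_ofReal_mul_I _
  have habs2 : ∀ x : ℝ,
      ‖Complex.exp (-(2 * Real.pi * Complex.I * (η : ℂ) * ((x : ℂ) - t)))‖ = 1 := by
    intro x
    rw [show (-(2 * Real.pi * Complex.I * (η:ℂ) * ((x:ℂ) - t)))
        = ((-(2 * Real.pi * η * (x - t)) : ℝ):ℂ) * Complex.I by push_cast; ring]
    exact Complex.norm_exp_ofReal_mul_I _
  have hgnorm : Integrable (fun x : ℝ => ‖g (x - t)‖) volume :=
    g.integrable.norm.comp_sub_right t
  have hgc : Continuous fun x : ℝ => g (x - t) :=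
    g.continuous.comp (continuous_id.sub continuous_const)
  have hAc : Continuous A := hA.continuous
  have hφc : Continuous φ := hφ.continuous
  have hGmeas : Continuous G := by
    apply Continuous.mul
    apply Continuous.mul
    apply Continuous.mul
    · exact Complex.continuous_ofReal.comp hAc
    · exact Complex.continuous_exp.comp (by fun_prop)
    · exact hgc
    · exact Complex.continuous_exp.comp (by fun_prop)
  have hPmeas : Continuous P := by
    apply Continuous.mul
    apply Continuous.mul
    apply Continuous.mul
    · exact continuous_const
    · exact Complex.continuous_exp.comp (by fun_prop)
    · exact hgc
    · exact Complex.continuous_exp.comp (by fun_prop)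
  have hGint : Integrable G volume := by
    refine (hgnorm.const_mul MA).mono' hGmeas.aestronglyMeasurable (ae_of_all _ fun x => ?_)
    rw [hG]
    simp only [norm_mul, Complex.norm_real, Real.norm_eq_abs, habs1, habs2]
    have h1 := hMA x
    have h2 := norm_nonneg (g (x - t))
    nlinarith [abs_nonneg (A x)]
  have hPint : Integrable P volume := by
    refine (hgnorm.const_mul |A t|).mono' hPmeas.aestronglyMeasurable (ae_of_all _ fun x => ?_)
    rw [hP]
    simp only [norm_mul, Complex.norm_real, Real.norm_eq_abs, habs1, habs2]
    simp
  -- the main term vanishes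
  have hPzero : (∫ x : ℝ, P x) = 0 := by
    have hrw : ∀ x : ℝ, P x = ((A t : ℂ) * Complex.exp (2 * Real.pi * Complex.I * (φ t : ℂ))) *
        ((fun u : ℝ => Complex.exp (((-2 * Real.pi * u * (η - c') : ℝ) : ℂ) * Complex.I) * g u)
          (x - t)) := by
      intro x
      have e1 : Complex.exp (2 * Real.pi * Complex.I * ((φ t + c' * (x - t) : ℝ) : ℂ)) *
          Complex.exp (-(2 * Real.pi * Complex.I * (η:ℂ) * ((x:ℂ) - t)))
          = Complex.exp (2 * Real.pi * Complex.I * (φ t : ℂ)) *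
            Complex.exp (((-2 * Real.pi * (x - t) * (η - c') : ℝ) : ℂ) * Complex.I) := by
        rw [← Complex.exp_add, ← Complex.exp_add]
        congr 1
        push_cast
        ring
      calc P x = (A t : ℂ) *
            (Complex.exp (2 * Real.pi * Complex.I * ((φ t + c' * (x - t) : ℝ) : ℂ)) *
              Complex.exp (-(2 * Real.pi * Complex.I * (η:ℂ) * ((x:ℂ) - t)))) * g (x - t) := by
            rw [hP]; ring
        _ = (A t : ℂ) * (Complex.exp (2 * Real.pi * Complex.I * (φ t : ℂ)) *
              Complex.exp (((-2 * Real.pi * (x - t) * (η - c') : ℝ) : ℂ) * Complex.I)) *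
              g (x - t) := by rw [e1]
        _ = _ := by push_cast; ring
    calc (∫ x : ℝ, P x)
        = ∫ x : ℝ, ((A t : ℂ) * Complex.exp (2 * Real.pi * Complex.I * (φ t : ℂ))) *
            ((fun u : ℝ => Complex.exp (((-2 * Real.pi * u * (η - c') : ℝ) : ℂ) * Complex.I) *
              g u) (x - t)) := by simp only [hrw]
      _ = ((A t : ℂ) * Complex.exp (2 * Real.pi * Complex.I * (φ t : ℂ))) *
            ∫ x : ℝ, (fun u : ℝ => Complex.exp (((-2 * Real.pi * u * (η - c') : ℝ) : ℂ) *
              Complex.I) * g u) (x - t) := integral_const_mul _ _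
      _ = ((A t : ℂ) * Complex.exp (2 * Real.pi * Complex.I * (φ t : ℂ))) *
            ∫ u : ℝ, Complex.exp (((-2 * Real.pi * u * (η - c') : ℝ) : ℂ) * Complex.I) * g u := by
            rw [integral_sub_right_eq_self
              (fun u : ℝ => Complex.exp (((-2 * Real.pi * u * (η - c') : ℝ) : ℂ) * Complex.I) *
                g u) t]
      _ = ((A t : ℂ) * Complex.exp (2 * Real.pi * Complex.I * (φ t : ℂ))) *
            FourierTransform.fourier (fun u : ℝ => g u) (η - c') := by
            rw [Real.fourier_real_eq_integral_exp_smul]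
            simp [smul_eq_mul]
      _ = 0 := by rw [hzero, mul_zero]
  -- pointwise bound
  set B : ℝ → ℝ := fun u => C * (‖u‖ ^ 1 * ‖g u‖) + Real.pi * MA * C * (‖u‖ ^ 2 * ‖g u‖) with hB
  have hAd : Differentiable ℝ A := hA.differentiable one_ne_zero
  have hAlip : ∀ x, |A x - A t| ≤ C * |x - t| := fun x => by
    simpa [Real.norm_eq_abs] using
      lip_aux_s4 hAd (fun z => by simpa [Real.norm_eq_abs] using hA' z) t x
  have hsub : ∀ x : ℝ, ‖G x - P x‖ ≤ B (x - t) := by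
    intro x
    set E1 : ℂ := Complex.exp (2 * Real.pi * Complex.I * (φ x : ℂ)) with hE1
    set E2 : ℂ := Complex.exp (2 * Real.pi * Complex.I * ((φ t + c' * (x - t) : ℝ) : ℂ)) with hE2
    have e1 : G x - P x = ((A x : ℂ) * E1 - (A t : ℂ) * E2) *
        (g (x - t) * Complex.exp (-(2 * Real.pi * Complex.I * (η : ℂ) * ((x : ℂ) - t)))) := by
      rw [hG, hP]; ring
    have hE1' : E1 = Complex.exp (((2 * Real.pi * φ x : ℝ) : ℂ) * Complex.I) := by
      rw [hE1]; congr 1; push_cast; ring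
    have hE2' : E2 = Complex.exp (((2 * Real.pi * (φ t + c' * (x - t)) : ℝ) : ℂ) * Complex.I) := by
      rw [hE2]; congr 1; push_cast; ring
    have hEdiff : ‖E1 - E2‖ ≤ Real.pi * C * (x - t) ^ 2 := by
      rw [hE1', hE2']
      refine (exp_I_lip _ _).trans ?_
      have := taylor_bound hφ hφ'' t x
      calc |2 * Real.pi * φ x - 2 * Real.pi * (φ t + c' * (x - t))|
          = 2 * Real.pi * |φ x - φ t - c' * (x - t)| := by
            rw [show (2 * Real.pi * φ x - 2 * Real.pi * (φ t + c' * (x - t)))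
              = (2 * Real.pi) * (φ x - φ t - c' * (x - t)) by ring, abs_mul,
              _root_.abs_of_nonneg (by positivity : (0:ℝ) ≤ 2 * Real.pi)]
        _ ≤ 2 * Real.pi * (C / 2 * (x - t) ^ 2) := by
            apply mul_le_mul_of_nonneg_left _ (by positivity)
            rw [hc']; exact this
        _ = Real.pi * C * (x - t) ^ 2 := by ring
    have hsplit : ‖(A x : ℂ) * E1 - (A t : ℂ) * E2‖
        ≤ C * |x - t| + MA * (Real.pi * C * (x - t) ^ 2) := by
      have hdec : (A x : ℂ) * E1 - (A t : ℂ) * E2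
          = ((A x : ℂ) - (A t : ℂ)) * E1 + (A t : ℂ) * (E1 - E2) := by ring
      rw [hdec]
      refine (norm_add_le _ _).trans ?_
      have h1 : ‖((A x : ℂ) - (A t : ℂ)) * E1‖ = |A x - A t| := by
        rw [norm_mul, hE1, habs1, mul_one,
          ← Complex.ofReal_sub, Complex.norm_real, Real.norm_eq_abs]
      have h2 : ‖(A t : ℂ) * (E1 - E2)‖ ≤ MA * (Real.pi * C * (x - t) ^ 2) := by
        rw [norm_mul, Complex.norm_real, Real.norm_eq_abs]
        exact mul_le_mul (hMA t) hEdiff (norm_nonneg _) hMA0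
      rw [h1]
      exact add_le_add ((hAlip x).trans le_rfl) h2
    rw [e1, norm_mul, norm_mul, habs2, mul_one]
    have hg0 : (0:ℝ) ≤ ‖g (x - t)‖ := norm_nonneg _
    have hBval : B (x - t) = C * (|x - t| ^ 1 * ‖g (x - t)‖)
        + Real.pi * MA * C * (|x - t| ^ 2 * ‖g (x - t)‖) := by rw [hB]; simp [Real.norm_eq_abs]
    have hsq : |x - t| ^ 2 = (x - t) ^ 2 := sq_abs _
    rw [hBval, pow_one, hsq]
    nlinarith [mul_le_mul_of_nonneg_right hsplit hg0, abs_nonneg (x - t),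
      norm_nonneg ((A x : ℂ) * E1 - (A t : ℂ) * E2)]
  have hBint0 : Integrable B volume :=
    ((g.integrable_pow_mul volume 1).const_mul C).add
      ((g.integrable_pow_mul volume 2).const_mul (Real.pi * MA * C))
  have hBint : Integrable (fun x : ℝ => B (x - t)) volume := hBint0.comp_sub_right t
  calc ‖∫ x : ℝ, G x‖ = ‖∫ x : ℝ, (G x - P x)‖ := by
        rw [integral_sub hGint hPint, hPzero, sub_zero]
    _ ≤ ∫ x : ℝ, B (x - t) := norm_integral_le_of_norm_le hBint (ae_of_all _ hsub)
    _ = ∫ u : ℝ, B u := integral_sub_right_eq_self B t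
    _ = C * (∫ u : ℝ, ‖u‖ ^ 1 * ‖g u‖) + Real.pi * MA * C * (∫ u : ℝ, ‖u‖ ^ 2 * ‖g u‖) := by
        rw [hB, integral_add ((g.integrable_pow_mul volume 1).const_mul C)
          ((g.integrable_pow_mul volume 2).const_mul (Real.pi * MA * C)),
          integral_const_mul, integral_const_mul]


/-- For a superposition `f = Σ_{k<K} A_k e^{2πiφ_k}` of IMFs whose instantaneous
frequencies are separated by `d`, and a Schwartz window `g` with `supp ĝ ⊂ [-d/2,d/2]`,
if `(t,η)` is at distance `≥ d/2` from every `φ'_k(t)`, then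
`|V_g f(t,η)| ≤ Σ_k ε‖φ'_k‖∞ (I₁ + π‖A_k‖∞ I₂)`. -/
theorem stft_small_off_frequency_zones
    (K : ℕ) (A φ : ℕ → ℝ → ℝ)
    (hA : ∀ k < K, ContDiff ℝ 1 (A k)) (hφ : ∀ k < K, ContDiff ℝ 2 (φ k))
    (hApos : ∀ k < K, ∀ x, 0 < A k x) (hφ'pos : ∀ k < K, ∀ x, 0 < deriv (φ k) x)
    (ε : ℝ) (hε : 0 < ε) (MA Mφ' : ℕ → ℝ)
    (hMA : ∀ k < K, ∀ x, |A k x| ≤ MA k)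
    (hMφ' : ∀ k < K, ∀ x, |deriv (φ k) x| ≤ Mφ' k)
    (hA' : ∀ k < K, ∀ x, |deriv (A k) x| ≤ ε * Mφ' k)
    (hφ'' : ∀ k < K, ∀ x, |deriv (deriv (φ k)) x| ≤ ε * Mφ' k)
    (d : ℝ) (hd : 0 < d)
    (hsep : ∀ k, k + 1 < K → ∀ s u : ℝ, deriv (φ (k + 1)) s - deriv (φ k) u > d)
    (g : SchwartzMap ℝ ℂ)
    (hg : Function.support (fun ξ => FourierTransform.fourier (fun u : ℝ => g u) ξ)
            ⊆ Set.Icc (-(d / 2)) (d / 2))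
    (I₁ I₂ : ℝ)
    (hI₁ : I₁ = ∫ u : ℝ, |u| * ‖g u‖)
    (hI₂ : I₂ = ∫ u : ℝ, |u| ^ 2 * ‖g u‖)
    (t η : ℝ) (hoff : ∀ k < K, d / 2 ≤ |η - deriv (φ k) t|) :
    ‖(∫ x : ℝ, (∑ k ∈ Finset.range K,
              (A k x : ℂ) * Complex.exp (2 * Real.pi * Complex.I * (φ k x : ℂ))) *
            g (x - t) * Complex.exp (-(2 * Real.pi * Complex.I * (η : ℂ) * ((x : ℂ) - t))))‖
      ≤ ∑ k ∈ Finset.range K, ε * Mφ' k * (I₁ + Real.pi * MA k * I₂) := by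
  have hint : ∀ k ∈ Finset.range K, Integrable (fun x : ℝ => (A k x : ℂ) *
      Complex.exp (2 * Real.pi * Complex.I * (φ k x : ℂ)) * g (x - t) *
      Complex.exp (-(2 * Real.pi * Complex.I * (η : ℂ) * ((x : ℂ) - t)))) volume := by
    intro k hk
    rw [Finset.mem_range] at hk
    have hAc : Continuous (A k) := (hA k hk).continuous
    have hφc : Continuous (φ k) := (hφ k hk).continuous
    have habs1 : ∀ θ : ℝ, ‖Complex.exp (2 * Real.pi * Complex.I * (θ : ℂ))‖ = 1 := by
      intro θ
      rw [show (2 * Real.pi * Complex.I * (θ:ℂ)) = ((2 * Real.pi * θ : ℝ):ℂ) * Complex.I by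
        push_cast; ring]
      exact Complex.norm_exp_ofReal_mul_I _
    have habs2 : ∀ x : ℝ,
        ‖Complex.exp (-(2 * Real.pi * Complex.I * (η : ℂ) * ((x : ℂ) - t)))‖ = 1 := by
      intro x
      rw [show (-(2 * Real.pi * Complex.I * (η:ℂ) * ((x:ℂ) - t)))
          = ((-(2 * Real.pi * η * (x - t)) : ℝ):ℂ) * Complex.I by push_cast; ring]
      exact Complex.norm_exp_ofReal_mul_I _
    have hgnorm : Integrable (fun x : ℝ => ‖g (x - t)‖) volume :=
      g.integrable.norm.comp_sub_right t
    have hgc : Continuous fun x : ℝ => g (x - t) :=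
      g.continuous.comp (continuous_id.sub continuous_const)
    have hmeas : Continuous (fun x : ℝ => (A k x : ℂ) *
        Complex.exp (2 * Real.pi * Complex.I * (φ k x : ℂ)) * g (x - t) *
        Complex.exp (-(2 * Real.pi * Complex.I * (η : ℂ) * ((x : ℂ) - t)))) := by
      apply Continuous.mul
      apply Continuous.mul
      apply Continuous.mul
      · exact Complex.continuous_ofReal.comp hAc
      · exact Complex.continuous_exp.comp (by fun_prop)
      · exact hgc
      · exact Complex.continuous_exp.comp (by fun_prop)
    refine (hgnorm.const_mul (MA k)).mono' hmeas.aestronglyMeasurable (ae_of_all _ fun x => ?_)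
    simp only [norm_mul, Complex.norm_real, Real.norm_eq_abs, habs1, habs2]
    have h1 := hMA k hk x
    have h2 := norm_nonneg (g (x - t))
    nlinarith [abs_nonneg (A k x)]
  have hrw : (fun x : ℝ => (∑ k ∈ Finset.range K,
        (A k x : ℂ) * Complex.exp (2 * Real.pi * Complex.I * (φ k x : ℂ))) *
        g (x - t) * Complex.exp (-(2 * Real.pi * Complex.I * (η : ℂ) * ((x : ℂ) - t))))
      = fun x : ℝ => ∑ k ∈ Finset.range K, ((A k x : ℂ) *
        Complex.exp (2 * Real.pi * Complex.I * (φ k x : ℂ)) * g (x - t) *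
        Complex.exp (-(2 * Real.pi * Complex.I * (η : ℂ) * ((x : ℂ) - t)))) := by
    funext x
    rw [Finset.sum_mul, Finset.sum_mul]
  rw [hrw, integral_finset_sum _ hint]
  refine le_trans (norm_sum_le _ _) (Finset.sum_le_sum fun k hk => ?_)
  rw [Finset.mem_range] at hk
  have hzero : FourierTransform.fourier (fun u : ℝ => g u) (η - deriv (φ k) t) = 0 :=
    fourier_vanish g hg (hoff k hk)
  have hmain := component_bound (A k) (φ k) (hA k hk) (hφ k hk) (MA k) (ε * Mφ' k)
    (hMA k hk) (hA' k hk) (hφ'' k hk) g t η hzero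
  have e₁ : (∫ u : ℝ, ‖u‖ ^ 1 * ‖g u‖) = I₁ := by
    rw [hI₁]
    simp only [show ∀ u : ℝ, ‖u‖ ^ 1 * ‖g u‖ = |u| * ‖g u‖ from fun u => by
      simp [Real.norm_eq_abs]]
  have e₂ : (∫ u : ℝ, ‖u‖ ^ 2 * ‖g u‖) = I₂ := by
    rw [hI₂]
    simp only [show ∀ u : ℝ, ‖u‖ ^ 2 * ‖g u‖ = |u| ^ 2 * ‖g u‖ from fun u => by
      simp [Real.norm_eq_abs]]
  rw [e₁, e₂] at hmain
  refine hmain.trans (le_of_eq ?_)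
  ring
end
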